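/- There exists a finite simple undirected graph G that is not bipartite and a labeling ℓ of its vertices such that: under ℓ and under F(ℓ) every vertex has a unique plurality label among its neighbors (so the synchronous LPA update F is forced, independently of the tie rule), F(ℓ) ≠ ℓ, and F(F(ℓ)) = ℓ. Hence the label-oscillation phenomenon of synchronous label propagation is not restricted to bipartite or star-like graphs: synchronous LPA can oscillate with period 2 on non-bipartite networks. -/

import Mathlib

open scoped Classical in
/-- The number of neighbors of `v` that carry label `l` under the labeling `ℓ`. -/
noncomputable def nbrCount {V : Type*} [Fintype V] {L : Type*}
    (G : SimpleGraph V) (ℓ : V → L) (v : V) (l : L) : ℕ :=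
  ((G.neighborFinset v).filter fun u => ℓ u = l).card

/-- `l` is a plurality label at `v` under `ℓ`. -/
def IsPlurality {V : Type*} [Fintype V] {L : Type*}
    (G : SimpleGraph V) (ℓ : V → L) (v : V) (l : L) : Prop :=
  ∀ l', nbrCount G ℓ v l' ≤ nbrCount G ℓ v l

/-- K_{3,3} plus the edge {0,1}: a non-bipartite graph. -/
def myG : SimpleGraph (Fin 6) where
  Adj u v := u ≠ v ∧ (((u : ℕ) < 3 ∧ 3 ≤ (v : ℕ)) ∨ ((v : ℕ) < 3 ∧ 3 ≤ (u : ℕ)) ∨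
    (u = 0 ∧ v = 1) ∨ (u = 1 ∧ v = 0))
  symm := ⟨by rintro u v ⟨h1, h2⟩; exact ⟨h1.symm, by tauto⟩⟩
  loopless := ⟨by rintro v ⟨h, -⟩; exact h rfl⟩

instance : DecidableRel myG.Adj := fun u v =>
  inferInstanceAs (Decidable (_ ∧ _))

def lab : Fin 6 → ℕ := fun v => if (v : ℕ) < 3 then 0 else 1

def lab' : Fin 6 → ℕ := fun v => if (v : ℕ) < 3 then 1 else 0

lemma nbrCount_eq (ℓ : Fin 6 → ℕ) (v : Fin 6) (l : ℕ) :
    nbrCount myG ℓ v l =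
      (Finset.univ.filter fun u => myG.Adj v u ∧ ℓ u = l).card := by
  unfold nbrCount
  congr 1
  ext u
  simp [SimpleGraph.mem_neighborFinset]

lemma countA0 : ∀ v : Fin 6, nbrCount myG lab v (lab' v) = 3 := by
  intro v
  rw [nbrCount_eq]
  revert v; decide

lemma countA1 : ∀ v : Fin 6, nbrCount myG lab v (lab v) ≤ 1 := by
  intro v
  rw [nbrCount_eq]
  revert v; decide

lemma countB0 : ∀ v : Fin 6, nbrCount myG lab' v (lab v) = 3 := by
  intro v
  rw [nbrCount_eq]
  revert v; decide

lemma countB1 : ∀ v : Fin 6, nbrCount myG lab' v (lab' v) ≤ 1 := by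
  intro v
  rw [nbrCount_eq]
  revert v; decide

lemma count_other (ℓ : Fin 6 → ℕ) (hℓ : ∀ u, ℓ u = 0 ∨ ℓ u = 1)
    (v : Fin 6) (l : ℕ) (h0 : l ≠ 0) (h1 : l ≠ 1) :
    nbrCount myG ℓ v l = 0 := by
  rw [nbrCount_eq, Finset.card_eq_zero, Finset.filter_eq_empty_iff]
  rintro u - ⟨-, he⟩
  rcases hℓ u with h | h <;> rw [h] at he <;> [exact h0 he.symm; exact h1 he.symm]

lemma labpair : ∀ v : Fin 6, (lab v = 0 ∧ lab' v = 1) ∨ (lab v = 1 ∧ lab' v = 0) := by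
  decide

/-- Uniqueness of the plurality label, given the count profile. -/
lemma unique_plurality (m t : Fin 6 → ℕ)
    (h3 : ∀ v, nbrCount myG m v (t v) = 3)
    (hle : ∀ v l, l ≠ t v → nbrCount myG m v l ≤ 1) :
    ∀ v : Fin 6, ∃! l : ℕ, IsPlurality myG m v l := by
  intro v
  refine ⟨t v, ?_, ?_⟩
  · intro l'
    by_cases h : l' = t v
    · subst h; exact le_refl _
    · calc nbrCount myG m v l' ≤ 1 := hle v l' h
        _ ≤ nbrCount myG m v (t v) := by rw [h3 v]; omega
  · intro l hl
    by_contra h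
    have h1 := hl (t v)
    have h2 := hle v l h
    rw [h3 v] at h1
    omega

lemma hle_lab : ∀ v l, l ≠ lab' v → nbrCount myG lab v l ≤ 1 := by
  intro v l h
  rcases labpair v with ⟨ha, hb⟩ | ⟨ha, hb⟩
  · by_cases h0 : l = 0
    · subst h0; have := countA1 v; rw [ha] at this; exact this
    · rw [count_other lab (by intro u; unfold lab; split <;> simp) v l h0 (hb ▸ h)]; omega
  · by_cases h1 : l = 1
    · subst h1; have := countA1 v; rw [ha] at this; exact this
    · rw [count_other lab (by intro u; unfold lab; split <;> simp) v l (hb ▸ h) h1]; omega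

lemma hle_lab' : ∀ v l, l ≠ lab v → nbrCount myG lab' v l ≤ 1 := by
  intro v l h
  rcases labpair v with ⟨ha, hb⟩ | ⟨ha, hb⟩
  · by_cases h1 : l = 1
    · subst h1; have := countB1 v; rw [hb] at this; exact this
    · rw [count_other lab' (by intro u; unfold lab'; split <;> simp) v l (ha ▸ h) h1]; omega
  · by_cases h0 : l = 0
    · subst h0; have := countB1 v; rw [hb] at this; exact this
    · rw [count_other lab' (by intro u; unfold lab'; split <;> simp) v l h0 (ha ▸ h)]; omega

lemma plur_lab_eq (v : Fin 6) (l : ℕ) (hl : IsPlurality myG lab v l) : l = lab' v := by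
  have := unique_plurality lab lab' countA0 hle_lab v
  rcases this with ⟨t, ht, huniq⟩
  rw [huniq l hl, ← huniq (lab' v) (by
    intro l'
    by_cases h : l' = lab' v
    · subst h; exact le_refl _
    · calc nbrCount myG lab v l' ≤ 1 := hle_lab v l' h
        _ ≤ _ := by rw [countA0 v]; omega)]

lemma plur_lab'_eq (v : Fin 6) (l : ℕ) (hl : IsPlurality myG lab' v l) : l = lab v := by
  have := unique_plurality lab' lab countB0 hle_lab' v
  rcases this with ⟨t, ht, huniq⟩
  rw [huniq l hl, ← huniq (lab v) (by
    intro l'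
    by_cases h : l' = lab v
    · subst h; exact le_refl _
    · calc nbrCount myG lab' v l' ≤ 1 := hle_lab' v l' h
        _ ≤ _ := by rw [countB0 v]; omega)]

/-- The oscillation phenomenon of synchronous label propagation is not restricted to
bipartite graphs: there exist a finite simple graph `G` that is not bipartite (its vertex
set admits no two-part split with every edge joining the parts) and a labeling `ℓ` such
that every vertex has a unique plurality label under `ℓ`, and for every synchronous LPA
update `F` (which is thus forced, independently of the tie rule) every vertex has a unique
plurality label under `F ℓ` as well, `F ℓ ≠ ℓ`, and `F (F ℓ) = ℓ`. -/
theorem synchronous_oscillation_nonbipartite :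
    ∃ (n : ℕ) (G : SimpleGraph (Fin n)) (ℓ : Fin n → ℕ),
      (¬ ∃ c : Fin n → Bool, ∀ u w : Fin n, G.Adj u w → c u ≠ c w) ∧
      (∀ v : Fin n, ∃! l : ℕ, IsPlurality G ℓ v l) ∧
      ∀ F : (Fin n → ℕ) → (Fin n → ℕ),
        (∀ (m : Fin n → ℕ) (v : Fin n), IsPlurality G m v (F m v)) →
          (∀ v : Fin n, ∃! l : ℕ, IsPlurality G (F ℓ) v l) ∧
          F ℓ ≠ ℓ ∧ F (F ℓ) = ℓ := by
  refine ⟨6, myG, lab, ?_, unique_plurality lab lab' countA0 hle_lab, ?_⟩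
  · rintro ⟨c, hc⟩
    have h01 := hc 0 1 (by decide)
    have h03 := hc 0 3 (by decide)
    have h13 := hc 1 3 (by decide)
    cases h : c 0 <;> cases h' : c 1 <;> cases h'' : c 3 <;> simp_all
  · intro F hF
    have hFl : F lab = lab' := by
      funext v
      exact plur_lab_eq v (F lab v) (hF lab v)
    have hFl' : F lab' = lab := by
      funext v
      exact plur_lab'_eq v (F lab' v) (hF lab' v)
    refine ⟨?_, ?_, ?_⟩
    · rw [hFl]; exact unique_plurality lab' lab countB0 hle_lab'
    · rw [hFl]
      intro h
      have := congrFun h 0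
      simp [lab, lab'] at this
    · rw [hFl, hFl']
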